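/- Define V(ξ) = Σ_{i=1}^{n−1} kᵢ φᵢ(ξ)². Let ξ : [0,∞) → ℝⁿ be differentiable with ξ′(t) = χ(ξ(t)) for all t ≥ 0. Then for all t ≥ 0, (d/dt) V(ξ(t)) = −2 ‖Σ_{j=1}^{n−1} kⱼ φⱼ(ξ(t)) ∇φⱼ(ξ(t))‖² ≤ 0; in particular t ↦ V(ξ(t)) is nonincreasing on [0,∞). -/

import Mathlib

open scoped RealInnerProductSpace

theorem stmt3 (n : ℕ) (hn : 2 ≤ n)
    (k : Fin (n - 1) → ℝ) (hk : ∀ i, 0 < k i)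
    (φ : Fin (n - 1) → EuclideanSpace ℝ (Fin n) → ℝ)
    (hφ : ∀ i, ContDiff ℝ 1 (φ i))
    (bot : EuclideanSpace ℝ (Fin n) → EuclideanSpace ℝ (Fin n))
    (hbot : ∀ ξ u : EuclideanSpace ℝ (Fin n),
      ⟪bot ξ, u⟫ = Matrix.det (Matrix.of (fun (i j : Fin n) =>
        if h : (j : ℕ) < n - 1 then gradient (φ ⟨j, h⟩) ξ i else u i)))
    (χ : EuclideanSpace ℝ (Fin n) → EuclideanSpace ℝ (Fin n))
    (hχ : ∀ ξ, χ ξ = bot ξ - ∑ i, (k i * φ i ξ) • gradient (φ i) ξ)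
    (V : EuclideanSpace ℝ (Fin n) → ℝ)
    (hV : ∀ ξ, V ξ = ∑ i, k i * φ i ξ ^ 2)
    (ξ : ℝ → EuclideanSpace ℝ (Fin n))
    (hξ : ∀ t : ℝ, 0 ≤ t → HasDerivAt ξ (χ (ξ t)) t) :
    (∀ t : ℝ, 0 ≤ t →
      HasDerivAt (fun s => V (ξ s))
        (-2 * ‖∑ j, (k j * φ j (ξ t)) • gradient (φ j) (ξ t)‖ ^ 2) t ∧
      -2 * ‖∑ j, (k j * φ j (ξ t)) • gradient (φ j) (ξ t)‖ ^ 2 ≤ 0) ∧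
    AntitoneOn (fun t => V (ξ t)) (Set.Ici 0) := by
  -- orthogonality of `bot x` to each gradient
  have horth : ∀ (x : EuclideanSpace ℝ (Fin n)) (i : Fin (n - 1)),
      ⟪bot x, gradient (φ i) x⟫ = 0 := by
    intro x i
    rw [hbot]
    have hi_n : (i : ℕ) < n := lt_of_lt_of_le i.2 (Nat.sub_le n 1)
    have hlast : n - 1 < n := Nat.sub_lt (by omega) one_pos
    apply Matrix.det_zero_of_column_eq (i := (⟨i, hi_n⟩ : Fin n)) (j := ⟨n - 1, hlast⟩)
    · intro h
      have := congrArg Fin.val h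
      simp only at this
      omega
    · intro r
      simp only [Matrix.of_apply]
      rw [dif_pos i.2, dif_neg (lt_irrefl _)]
  -- the pointwise derivative statement
  have main : ∀ t : ℝ, 0 ≤ t →
      HasDerivAt (fun s => V (ξ s))
        (-2 * ‖∑ j, (k j * φ j (ξ t)) • gradient (φ j) (ξ t)‖ ^ 2) t := by
    intro t ht
    set S := ∑ j, (k j * φ j (ξ t)) • gradient (φ j) (ξ t) with hS
    have hd : ∀ i : Fin (n - 1), HasDerivAt (fun s => φ i (ξ s))
        ⟪gradient (φ i) (ξ t), χ (ξ t)⟫ t := by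
      intro i
      have hdiff : DifferentiableAt ℝ (φ i) (ξ t) :=
        ((hφ i).differentiable one_ne_zero) (ξ t)
      have hg := hdiff.hasGradientAt
      rw [hasGradientAt_iff_hasFDerivAt] at hg
      have := hg.comp_hasDerivAt t (hξ t ht)
      exact this
    have hVd : HasDerivAt (fun s => V (ξ s))
        (∑ i, k i * (2 * φ i (ξ t) ^ 1 * ⟪gradient (φ i) (ξ t), χ (ξ t)⟫)) t := by
      have : (fun s => V (ξ s)) = fun s => ∑ i, k i * φ i (ξ s) ^ 2 := by
        funext s; rw [hV]
      rw [this]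
      exact HasDerivAt.fun_sum fun i _ => ((hd i).pow 2).const_mul (k i)
    convert hVd using 1
    have hinner : ∀ i : Fin (n - 1),
        ⟪gradient (φ i) (ξ t), χ (ξ t)⟫ = -⟪gradient (φ i) (ξ t), S⟫ := by
      intro i
      rw [hχ, inner_sub_right, real_inner_comm, horth, ← hS]
      ring
    have key : ∑ i, k i * (2 * φ i (ξ t) ^ 1 * ⟪gradient (φ i) (ξ t), χ (ξ t)⟫)
        = -2 * ⟪S, S⟫ := by
      have : ⟪S, S⟫ = ∑ i, (k i * φ i (ξ t)) * ⟪gradient (φ i) (ξ t), S⟫ := by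
        rw [hS, sum_inner]
        exact Finset.sum_congr rfl fun i _ => by rw [real_inner_smul_left]
      rw [this, Finset.mul_sum]
      refine Finset.sum_congr rfl fun i _ => ?_
      rw [hinner]; ring
    rw [key, real_inner_self_eq_norm_sq]
  have hnonpos : ∀ t : ℝ,
      -2 * ‖∑ j, (k j * φ j (ξ t)) • gradient (φ j) (ξ t)‖ ^ 2 ≤ 0 := by
    intro t
    have : (0:ℝ) ≤ ‖∑ j, (k j * φ j (ξ t)) • gradient (φ j) (ξ t)‖ ^ 2 :=
      sq_nonneg _
    nlinarith
  refine ⟨fun t ht => ⟨main t ht, hnonpos t⟩, ?_⟩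
  apply antitoneOn_of_deriv_nonpos (convex_Ici 0)
  · intro t ht
    exact (main t ht).continuousAt.continuousWithinAt
  · intro t ht
    rw [interior_Ici] at ht
    exact (main t (le_of_lt ht)).differentiableAt.differentiableWithinAt
  · intro t ht
    rw [interior_Ici] at ht
    rw [(main t (le_of_lt ht)).deriv]
    exact hnonpos t
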